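/- Let ε = +1 (case S²×R) or ε = −1 (case H²×R), and let P = (x, y, z) with y² + z² > 0 and Q := x² + ε(y² + z²) > 0 (and additionally x/√Q ∈ [−1, 1] enforced automatically when ε = +1, and x/√Q ≥ 1 when ε = −1). Define the tangent data vector w(P) = ((1/2)·log Q, (y/√(y²+z²))·arcC(x/√Q), (z/√(y²+z²))·arcC(x/√Q)), where arcC = arccos if ε = +1 and arcC = arcosh if ε = −1. Then the translation curve γ(τ) = (e^{τ sin v} C(τ cos v), e^{τ sin v} S(τ cos v) cos u, e^{τ sin v} S(τ cos v) sin u) (with C = cos, S = sin if ε = +1; C = cosh, S = sinh if ε = −1) with parameters τ₀ = |w(P)|, sin v = (1/(2τ₀))·log Q, u chosen with cos u = y/√(y²+z²), sin u = z/√(y²+z²), satisfies γ(τ₀) = (x, y, z); moreover τ₀ · γ'(0) = w(P), i.e. w(P) is τ₀ times the unit tangent vector (sin v, cos v cos u, cos v sin u) of the translation curve from the origin (1,0,0) to P. -/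

import Mathlib

open Real

noncomputable def arcosh (x : ℝ) : ℝ := Real.log (x + Real.sqrt (x ^ 2 - 1))

/-- `arcC` is `arccos` in the spherical case (ε = 1) and `arcosh` in the hyperbolic case. -/
noncomputable def arcC (ε x : ℝ) : ℝ := if ε = 1 then Real.arccos x else _root_.arcosh x

/-- `C` is `cos` (ε = 1) or `cosh` (ε = -1). -/
noncomputable def Cfun (ε t : ℝ) : ℝ := if ε = 1 then Real.cos t else Real.cosh t

/-- `S` is `sin` (ε = 1) or `sinh` (ε = -1). -/
noncomputable def Sfun (ε t : ℝ) : ℝ := if ε = 1 then Real.sin t else Real.sinh t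

lemma arcosh_aux {t : ℝ} (ht : 1 ≤ t) :
    Real.exp (_root_.arcosh t) = t + Real.sqrt (t ^ 2 - 1) ∧
    Real.exp (-(_root_.arcosh t)) = t - Real.sqrt (t ^ 2 - 1) := by
  have hd0 : 0 ≤ t ^ 2 - 1 := by nlinarith
  have hd2 : Real.sqrt (t ^ 2 - 1) ^ 2 = t ^ 2 - 1 := Real.sq_sqrt hd0
  have hs : 0 < t + Real.sqrt (t ^ 2 - 1) := by
    have := Real.sqrt_nonneg (t ^ 2 - 1); linarith
  have h1 : Real.exp (_root_.arcosh t) = t + Real.sqrt (t ^ 2 - 1) := Real.exp_log hs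
  refine ⟨h1, ?_⟩
  have hinv : (t + Real.sqrt (t ^ 2 - 1)) * (t - Real.sqrt (t ^ 2 - 1)) = 1 := by
    nlinarith [hd2]
  rw [Real.exp_neg, h1, inv_eq_of_mul_eq_one_right hinv]

lemma cosh_arcosh {t : ℝ} (ht : 1 ≤ t) : Real.cosh (_root_.arcosh t) = t := by
  obtain ⟨h1, h2⟩ := arcosh_aux ht
  rw [Real.cosh_eq, h1, h2]; ring

lemma sinh_arcosh {t : ℝ} (ht : 1 ≤ t) : Real.sinh (_root_.arcosh t) = Real.sqrt (t ^ 2 - 1) := by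
  obtain ⟨h1, h2⟩ := arcosh_aux ht
  rw [Real.sinh_eq, h1, h2]; ring

lemma arcosh_pos {t : ℝ} (ht : 1 < t) : 0 < _root_.arcosh t := by
  apply Real.log_pos
  have := Real.sqrt_nonneg (t ^ 2 - 1); linarith

lemma translation_core (x y z Q w₁ w₂ w₃ τ₀ u v A : ℝ) (C S : ℝ → ℝ)
    (hyz : 0 < y ^ 2 + z ^ 2) (hQ : 0 < Q)
    (hA0 : 0 ≤ A)
    (hne : ¬ (A = 0 ∧ Real.log Q = 0))
    (hCA : C A = x / Real.sqrt Q)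
    (hSA : S A = Real.sqrt (y ^ 2 + z ^ 2) / Real.sqrt Q)
    (hw₁ : w₁ = Real.log Q / 2)
    (hw₂ : w₂ = y / Real.sqrt (y ^ 2 + z ^ 2) * A)
    (hw₃ : w₃ = z / Real.sqrt (y ^ 2 + z ^ 2) * A)
    (hτ₀ : τ₀ = Real.sqrt (w₁ ^ 2 + w₂ ^ 2 + w₃ ^ 2))
    (hv : v ∈ Set.Icc (-(π/2)) (π/2))
    (hsinv : Real.sin v = Real.log Q / (2 * τ₀))
    (hcosu : Real.cos u = y / Real.sqrt (y ^ 2 + z ^ 2))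
    (hsinu : Real.sin u = z / Real.sqrt (y ^ 2 + z ^ 2)) :
    (Real.exp (τ₀ * Real.sin v) * C (τ₀ * Real.cos v) = x ∧
     Real.exp (τ₀ * Real.sin v) * S (τ₀ * Real.cos v) * Real.cos u = y ∧
     Real.exp (τ₀ * Real.sin v) * S (τ₀ * Real.cos v) * Real.sin u = z) ∧
    (τ₀ * Real.sin v = w₁ ∧
     τ₀ * (Real.cos v * Real.cos u) = w₂ ∧
     τ₀ * (Real.cos v * Real.sin u) = w₃) := by
  have hr : 0 < Real.sqrt (y ^ 2 + z ^ 2) := Real.sqrt_pos.2 hyz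
  have hr2 : Real.sqrt (y ^ 2 + z ^ 2) ^ 2 = y ^ 2 + z ^ 2 := Real.sq_sqrt hyz.le
  have hsQ : 0 < Real.sqrt Q := Real.sqrt_pos.2 hQ
  have hsQ2 : Real.sqrt Q ^ 2 = Q := Real.sq_sqrt hQ.le
  have hw23 : w₂ ^ 2 + w₃ ^ 2 = A ^ 2 := by
    rw [hw₂, hw₃]
    rw [show (y / Real.sqrt (y ^ 2 + z ^ 2) * A) ^ 2 + (z / Real.sqrt (y ^ 2 + z ^ 2) * A) ^ 2
        = (y ^ 2 + z ^ 2) / Real.sqrt (y ^ 2 + z ^ 2) ^ 2 * A ^ 2 by ring,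
      hr2, div_self hyz.ne', one_mul]
  have hτsq : τ₀ ^ 2 = w₁ ^ 2 + A ^ 2 := by
    rw [hτ₀, Real.sq_sqrt (by positivity)]
    linarith
  have hτ0 : 0 ≤ τ₀ := hτ₀ ▸ Real.sqrt_nonneg _
  have hτpos : 0 < τ₀ := by
    rcases lt_or_eq_of_le hτ0 with h | h
    · exact h
    · exfalso
      have h0 : w₁ ^ 2 + A ^ 2 = 0 := by rw [← hτsq, ← h]; ring
      have hA2 : A ^ 2 = 0 := le_antisymm (by nlinarith [sq_nonneg w₁]) (sq_nonneg A)
      have hw12 : w₁ ^ 2 = 0 := by linarith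
      have hA : A = 0 := by
        have := sq_eq_zero_iff.1 hA2; simpa using this
      have hw1 : w₁ = 0 := by
        have := sq_eq_zero_iff.1 hw12; simpa using this
      exact hne ⟨hA, by rw [hw₁] at hw1; linarith⟩
  have hts : τ₀ * Real.sin v = w₁ := by
    rw [hsinv, hw₁]; field_simp
  have hcv : 0 ≤ Real.cos v := Real.cos_nonneg_of_mem_Icc (by simpa using hv)
  have htc : τ₀ * Real.cos v = A := by
    have hsq : (τ₀ * Real.cos v) ^ 2 = A ^ 2 := by
      have h1 : Real.cos v ^ 2 = 1 - Real.sin v ^ 2 := Real.cos_sq' v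
      have h2 : (τ₀ * Real.cos v) ^ 2 = τ₀ ^ 2 - (τ₀ * Real.sin v) ^ 2 := by
        rw [mul_pow, h1, mul_pow]; ring
      rw [h2, hts, hτsq]; ring
    calc τ₀ * Real.cos v = Real.sqrt ((τ₀ * Real.cos v) ^ 2) :=
          (Real.sqrt_sq (by positivity)).symm
      _ = A := by rw [hsq, Real.sqrt_sq hA0]
  have hexp : Real.exp (τ₀ * Real.sin v) = Real.sqrt Q := by
    rw [hts, hw₁, ← Real.log_sqrt hQ.le, Real.exp_log hsQ]
  refine ⟨⟨?_, ?_, ?_⟩, hts, ?_, ?_⟩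
  · rw [hexp, htc, hCA]
    field_simp
  · rw [hexp, htc, hSA, hcosu]
    field_simp
  · rw [hexp, htc, hSA, hsinu]
    field_simp
  · rw [show τ₀ * (Real.cos v * Real.cos u) = τ₀ * Real.cos v * Real.cos u by ring,
      htc, hcosu, hw₂]; ring
  · rw [show τ₀ * (Real.cos v * Real.sin u) = τ₀ * Real.cos v * Real.sin u by ring,
      htc, hsinu, hw₃]; ring

theorem tangent_of_translation_curve (ε x y z : ℝ)
    (hε : ε = 1 ∨ ε = -1)
    (hyz : 0 < y ^ 2 + z ^ 2)
    (Q : ℝ) (hQdef : Q = x ^ 2 + ε * (y ^ 2 + z ^ 2)) (hQ : 0 < Q)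
    (hhyp : ε = -1 → 0 < x)
    (hsph : ε = 1 → ¬ (Real.arccos (x / Real.sqrt Q) = 0 ∧ Real.log Q = 0))
    (w₁ w₂ w₃ : ℝ)
    (hw₁ : w₁ = Real.log Q / 2)
    (hw₂ : w₂ = y / Real.sqrt (y ^ 2 + z ^ 2) * arcC ε (x / Real.sqrt Q))
    (hw₃ : w₃ = z / Real.sqrt (y ^ 2 + z ^ 2) * arcC ε (x / Real.sqrt Q))
    (τ₀ : ℝ) (hτ₀ : τ₀ = Real.sqrt (w₁ ^ 2 + w₂ ^ 2 + w₃ ^ 2))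
    (u v : ℝ)
    (hv : v ∈ Set.Icc (-(π/2)) (π/2))
    (hsinv : Real.sin v = Real.log Q / (2 * τ₀))
    (hcosu : Real.cos u = y / Real.sqrt (y ^ 2 + z ^ 2))
    (hsinu : Real.sin u = z / Real.sqrt (y ^ 2 + z ^ 2)) :
    (Real.exp (τ₀ * Real.sin v) * Cfun ε (τ₀ * Real.cos v) = x ∧
     Real.exp (τ₀ * Real.sin v) * Sfun ε (τ₀ * Real.cos v) * Real.cos u = y ∧
     Real.exp (τ₀ * Real.sin v) * Sfun ε (τ₀ * Real.cos v) * Real.sin u = z) ∧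
    (τ₀ * Real.sin v = w₁ ∧
     τ₀ * (Real.cos v * Real.cos u) = w₂ ∧
     τ₀ * (Real.cos v * Real.sin u) = w₃) := by
  have hsQ : 0 < Real.sqrt Q := Real.sqrt_pos.2 hQ
  have hsQ2 : Real.sqrt Q ^ 2 = Q := Real.sq_sqrt hQ.le
  rcases hε with h | h <;> subst h
  · -- spherical case
    simp only [arcC, if_pos rfl] at hw₂ hw₃
    simp only [Cfun, Sfun, if_pos rfl]
    have hx2 : x ^ 2 ≤ Q := by rw [hQdef]; nlinarith
    have hxle : x ≤ Real.sqrt Q := by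
      calc x ≤ |x| := le_abs_self x
        _ = Real.sqrt (x ^ 2) := (Real.sqrt_sq_eq_abs x).symm
        _ ≤ Real.sqrt Q := Real.sqrt_le_sqrt hx2
    have hxge : -(Real.sqrt Q) ≤ x := by
      have : -x ≤ Real.sqrt Q := by
        calc -x ≤ |x| := neg_le_abs x
          _ = Real.sqrt (x ^ 2) := (Real.sqrt_sq_eq_abs x).symm
          _ ≤ Real.sqrt Q := Real.sqrt_le_sqrt hx2
      linarith
    have h1 : x / Real.sqrt Q ≤ 1 := (div_le_one hsQ).2 hxle
    have h2 : -1 ≤ x / Real.sqrt Q := by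
      rw [le_div_iff₀ hsQ]; linarith
    have hCA : Real.cos (Real.arccos (x / Real.sqrt Q)) = x / Real.sqrt Q :=
      Real.cos_arccos h2 h1
    have hSA : Real.sin (Real.arccos (x / Real.sqrt Q))
        = Real.sqrt (y ^ 2 + z ^ 2) / Real.sqrt Q := by
      rw [Real.sin_arccos]
      have heq : 1 - (x / Real.sqrt Q) ^ 2 = (y ^ 2 + z ^ 2) / Q := by
        rw [div_pow, hsQ2]
        field_simp
        rw [hQdef]; ring
      rw [heq, Real.sqrt_div hyz.le, ]
    exact translation_core x y z Q w₁ w₂ w₃ τ₀ u v _ _ _ hyz hQ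
      (Real.arccos_nonneg _) (fun hc => hsph rfl hc) hCA hSA hw₁ hw₂ hw₃ hτ₀ hv hsinv hcosu hsinu
  · -- hyperbolic case
    simp only [arcC, if_neg (show (-1 : ℝ) ≠ 1 by norm_num)] at hw₂ hw₃
    simp only [Cfun, Sfun, if_neg (show (-1 : ℝ) ≠ 1 by norm_num)]
    have hx : 0 < x := hhyp rfl
    have hQlt : Q < x ^ 2 := by rw [hQdef]; nlinarith
    have hsQx : Real.sqrt Q < x := by
      calc Real.sqrt Q < Real.sqrt (x ^ 2) := Real.sqrt_lt_sqrt hQ.le hQlt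
        _ = x := Real.sqrt_sq hx.le
    have ht : 1 < x / Real.sqrt Q := (one_lt_div hsQ).2 hsQx
    have hCA : Real.cosh (_root_.arcosh (x / Real.sqrt Q)) = x / Real.sqrt Q := _root_.cosh_arcosh ht.le
    have hSA : Real.sinh (_root_.arcosh (x / Real.sqrt Q))
        = Real.sqrt (y ^ 2 + z ^ 2) / Real.sqrt Q := by
      rw [_root_.sinh_arcosh ht.le]
      have heq : (x / Real.sqrt Q) ^ 2 - 1 = (y ^ 2 + z ^ 2) / Q := by
        rw [div_pow, hsQ2]
        field_simp
        rw [hQdef]; ring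
      rw [heq, Real.sqrt_div hyz.le]
    exact translation_core x y z Q w₁ w₂ w₃ τ₀ u v _ _ _ hyz hQ
      (_root_.arcosh_pos ht).le (fun hc => (_root_.arcosh_pos ht).ne' hc.1) hCA hSA
      hw₁ hw₂ hw₃ hτ₀ hv hsinv hcosu hsinu
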